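/- Let ω = ℝ^ℕ carry the product topology and let A be a continuous linear operator on ω satisfying: for every n ∈ ℕ there exists m ∈ ℕ such that for all k ∈ ℕ and all x ∈ ω, if x_j = 0 for all j ≤ m then (A^k x)_j = 0 for all j ≤ n. Then for every t ≥ 0 and x ∈ ω the series exp(tA) x = ∑_{k=0}^∞ (t^k / k!) • A^k x converges in ω, the family (exp(tA))_{t≥0} is a strongly continuous semigroup of continuous linear operators on ω, and its generator is A. -/

import Mathlib

open Filter Topology Set

set_option maxHeartbeats 1000000
set_option synthInstance.maxHeartbeats 400000

noncomputable section Stmt7Aux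
namespace Stmt7Aux

variable (m : ℕ → ℕ)

def Mf (n : ℕ) : ℕ := max n ((Finset.range (n+1)).sup m)

lemma le_Mf (n : ℕ) : n ≤ Mf m n := le_max_left _ _

lemma m_le_Mf {i n : ℕ} (h : i ≤ n) : m i ≤ Mf m n :=
  le_trans (Finset.le_sup (Finset.mem_range.2 (Nat.lt_succ_of_le h))) (le_max_right _ _)

lemma Mf_mono : Monotone (Mf m) := fun a b hab =>
  max_le (le_trans hab (le_Mf m b))
    (le_trans (Finset.sup_mono (by
      intro x hx; simp only [Finset.mem_range] at *; omega)) (le_max_right _ _))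

lemma lt_Mf {j n : ℕ} (h : j ≤ n) : j < Mf m n + 1 :=
  Nat.lt_succ_of_le (h.trans (le_Mf m n))

abbrev E (n : ℕ) := Fin (Mf m n + 1) → ℝ

def piL (n : ℕ) : (ℕ → ℝ) →L[ℝ] E m n :=
  ContinuousLinearMap.pi fun i => ContinuousLinearMap.proj (i : ℕ)

@[simp] lemma piL_apply (n : ℕ) (x : ℕ → ℝ) (i : Fin (Mf m n + 1)) :
    piL m n x i = x (i : ℕ) := rfl

def iotaL (n : ℕ) : E m n →ₗ[ℝ] (ℕ → ℝ) where
  toFun v j := if h : j < Mf m n + 1 then v ⟨j, h⟩ else 0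
  map_add' u v := by ext j; by_cases h : j ≤ Mf m n <;> simp [h]
  map_smul' c v := by ext j; by_cases h : j ≤ Mf m n <;> simp [h]

lemma iotaL_apply_of_lt (n : ℕ) (v : E m n) {j : ℕ} (h : j < Mf m n + 1) :
    iotaL m n v j = v ⟨j, h⟩ := dif_pos h

lemma piL_iotaL (n : ℕ) (v : E m n) : piL m n (iotaL m n v) = v := by
  ext i
  rw [piL_apply, iotaL_apply_of_lt m n v i.isLt]

variable (A : (ℕ → ℝ) →L[ℝ] (ℕ → ℝ))

def Cop (n : ℕ) : E m n →L[ℝ] E m n :=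
  LinearMap.toContinuousLinearMap
    ((piL m n).toLinearMap ∘ₗ (A.toLinearMap ∘ₗ iotaL m n))

lemma Cop_apply (n : ℕ) (v : E m n) : Cop m A n v = piL m n (A (iotaL m n v)) := rfl

variable {m A}

/-- The truncation lemma. -/
lemma trunc (hm : ∀ n k x, (∀ j ≤ m n, x j = 0) → ∀ j ≤ n, (A ^ k) x j = 0)
    (n k : ℕ) (x : ℕ → ℝ) {j : ℕ} (hj : j ≤ n) :
    (A ^ k) x j = (A ^ k) (iotaL m n (piL m n x)) j := by
  have h0 : ∀ j' ≤ m n, (x - iotaL m n (piL m n x)) j' = 0 := by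
    intro j' hj'
    have hlt : j' < Mf m n + 1 := Nat.lt_succ_of_le ((m_le_Mf m le_rfl).trans' hj')
    simp [iotaL_apply_of_lt m n _ hlt]
  have := hm n k _ h0 j hj
  rw [map_sub] at this
  have h2 : (A ^ k) x j - (A ^ k) (iotaL m n (piL m n x)) j = 0 := this
  linarith

lemma keyA (hm : ∀ n k x, (∀ j ≤ m n, x j = 0) → ∀ j ≤ n, (A ^ k) x j = 0)
    (n : ℕ) : ∀ (k : ℕ) (x : ℕ → ℝ) {j : ℕ} (hj : j ≤ n),
    (A ^ k) x j = ((Cop m A n) ^ k) (piL m n x) ⟨j, lt_Mf m hj⟩ := by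
  intro k
  induction k with
  | zero => intro x j hj; simp
  | succ k ih =>
    intro x j hj
    rw [trunc hm n (k+1) x hj]
    have e1 : (A ^ (k+1)) (iotaL m n (piL m n x)) =
        (A ^ k) (A (iotaL m n (piL m n x))) := by
      rw [pow_succ, ContinuousLinearMap.mul_apply]
    rw [e1, ih (A (iotaL m n (piL m n x))) hj, ← Cop_apply]
    have e2 : ((Cop m A n) ^ (k+1)) (piL m n x) =
        ((Cop m A n) ^ k) ((Cop m A n) (piL m n x)) := by
      rw [pow_succ, ContinuousLinearMap.mul_apply]
    rw [e2]

variable (m A)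

def Texp (t : ℝ) : (ℕ → ℝ) →L[ℝ] (ℕ → ℝ) :=
  ContinuousLinearMap.pi fun j =>
    (ContinuousLinearMap.proj (⟨j, lt_Mf m le_rfl⟩ : Fin (Mf m j + 1))).comp
      ((NormedSpace.exp (t • Cop m A j)).comp (piL m j))

lemma Texp_apply (t : ℝ) (x : ℕ → ℝ) (j : ℕ) :
    Texp m A t x j =
      (NormedSpace.exp (t • Cop m A j)) (piL m j x) ⟨j, lt_Mf m le_rfl⟩ := rfl

variable {m A}

lemma coordHasSum (hm : ∀ n k x, (∀ j ≤ m n, x j = 0) → ∀ j ≤ n, (A ^ k) x j = 0)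
    (t : ℝ) (x : ℕ → ℝ) (n : ℕ) {j : ℕ} (hj : j ≤ n) :
    HasSum (fun k : ℕ => (t ^ k / (Nat.factorial k : ℝ)) * ((A ^ k) x j))
      ((NormedSpace.exp (t • Cop m A n)) (piL m n x) ⟨j, lt_Mf m hj⟩) := by
  have h1 : HasSum (fun k : ℕ => ((Nat.factorial k : ℝ)⁻¹) • (t • Cop m A n) ^ k)
      (NormedSpace.exp (t • Cop m A n)) := NormedSpace.exp_series_hasSum_exp' _
  let L : ((E m n) →L[ℝ] (E m n)) →L[ℝ] ℝ :=
    (ContinuousLinearMap.proj (⟨j, lt_Mf m hj⟩ : Fin (Mf m n + 1))).comp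
      ((ContinuousLinearMap.apply ℝ (E m n)) (piL m n x))
  have h2 := L.hasSum h1
  have e : ∀ k : ℕ, L (((Nat.factorial k : ℝ)⁻¹) • (t • Cop m A n) ^ k)
      = (t ^ k / (Nat.factorial k : ℝ)) * ((A ^ k) x j) := by
    intro k
    have e1 : L (((Nat.factorial k : ℝ)⁻¹) • (t • Cop m A n) ^ k)
        = ((Nat.factorial k : ℝ)⁻¹) * (((t • Cop m A n) ^ k) (piL m n x) ⟨j, lt_Mf m hj⟩) := by
      rw [map_smul]; rfl
    have e2 : ((t • Cop m A n) ^ k) (piL m n x) = t ^ k • (((Cop m A n) ^ k) (piL m n x)) := by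
      rw [smul_pow, ContinuousLinearMap.smul_apply]
    rw [e1, e2, Pi.smul_apply, smul_eq_mul, keyA hm n k x hj]
    ring
  rw [funext e] at h2
  exact h2

lemma consistency (hm : ∀ n k x, (∀ j ≤ m n, x j = 0) → ∀ j ≤ n, (A ^ k) x j = 0)
    (t : ℝ) (x : ℕ → ℝ) (n : ℕ) {j : ℕ} (hj : j ≤ n) :
    (NormedSpace.exp (t • Cop m A n)) (piL m n x) ⟨j, lt_Mf m hj⟩ = Texp m A t x j :=
  (coordHasSum hm t x n hj).unique (coordHasSum hm t x j le_rfl)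

end Stmt7Aux
end Stmt7Aux

open Stmt7Aux

/-- If a continuous linear operator `A` on `ω = ℝ^ℕ` satisfies
the finite-propagation condition, then the exponential series
`exp(tA) x = ∑_{k=0}^∞ (t^k/k!) • A^k x` converges for every `t ≥ 0` and `x`,
the resulting family is a strongly continuous semigroup of continuous linear
operators, and its generator is `A`. -/
theorem stmt7
    (A : (ℕ → ℝ) →L[ℝ] (ℕ → ℝ))
    (hcond : ∀ n : ℕ, ∃ m : ℕ, ∀ k : ℕ, ∀ x : ℕ → ℝ,
      (∀ j ≤ m, x j = 0) → ∀ j ≤ n, (A ^ k) x j = 0) :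
    ∃ T : ℝ → (ℕ → ℝ) →L[ℝ] (ℕ → ℝ),
      (∀ t : ℝ, 0 ≤ t → ∀ x : ℕ → ℝ,
        Tendsto (fun N : ℕ => ∑ k ∈ Finset.range N,
            (t ^ k / (Nat.factorial k : ℝ)) • (A ^ k) x) atTop (𝓝 (T t x))) ∧
      T 0 = ContinuousLinearMap.id ℝ (ℕ → ℝ) ∧
      (∀ s t : ℝ, 0 ≤ s → 0 ≤ t → T (s + t) = (T s).comp (T t)) ∧
      (∀ x : ℕ → ℝ, ContinuousOn (fun t : ℝ => T t x) (Set.Ici 0)) ∧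
      ∀ x : ℕ → ℝ,
        Tendsto (fun h : ℝ => h⁻¹ • (T h x - x)) (𝓝[>] 0) (𝓝 (A x)) := by
  choose m hm using hcond
  refine ⟨Texp m A, ?_, ?_, ?_, ?_, ?_⟩
  · -- convergence of the series
    intro t _ x
    rw [tendsto_pi_nhds]
    intro j
    have h := (coordHasSum hm t x j (le_refl j)).tendsto_sum_nat
    rw [← Texp_apply m A t x j] at h
    convert h using 2 with N
    simp [Finset.sum_apply]
  · -- T 0 = id
    ext x j
    rw [Texp_apply]
    simp [NormedSpace.exp_zero]
  · -- semigroup law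
    intro s t _ _
    ext x j
    have hq : j ≤ Mf m j := le_Mf m j
    set q := Mf m j with hqdef
    -- LHS via level q
    rw [ContinuousLinearMap.comp_apply]
    rw [← consistency hm (s+t) x q hq]
    -- RHS
    have hMle : Mf m j ≤ Mf m q := Mf_mono m hq
    set w : E m q := NormedSpace.exp (t • Cop m A q) ((piL m q) x) with hw
    have hpi : piL m j (Texp m A t x) = piL m j (iotaL m q w) := by
      ext i
      have hiq : (i : ℕ) ≤ q := Nat.lt_succ_iff.mp i.isLt
      have hilt : (i : ℕ) < Mf m q + 1 := Nat.lt_succ_of_le (hiq.trans (le_Mf m q))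
      rw [piL_apply, piL_apply, iotaL_apply_of_lt m q w hilt,
        ← consistency hm t x q hiq]
    have hrhs : Texp m A s (Texp m A t x) j = Texp m A s (iotaL m q w) j := by
      rw [Texp_apply, Texp_apply, hpi]
    rw [hrhs, ← consistency hm s (iotaL m q w) q hq, piL_iotaL]
    have hcomm : Commute (s • Cop m A q) (t • Cop m A q) :=
      ((Commute.refl (Cop m A q)).smul_left s).smul_right t
    let +nondep : NormedAlgebra ℚ (E m q →L[ℝ] E m q) := .restrictScalars ℚ ℝ _
    rw [add_smul, NormedSpace.exp_add_of_commute hcomm, ContinuousLinearMap.mul_apply]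
  · -- continuity in t
    intro x
    apply Continuous.continuousOn
    refine continuous_pi fun j => ?_
    show Continuous fun t : ℝ =>
      (NormedSpace.exp (t • Cop m A j)) ((piL m j) x) ⟨j, lt_Mf m (le_refl j)⟩
    have h1 : Continuous fun t : ℝ => NormedSpace.exp (t • Cop m A j) :=
      let +nondep : NormedAlgebra ℚ (E m j →L[ℝ] E m j) := .restrictScalars ℚ ℝ _
      NormedSpace.exp_continuous.comp (continuous_id.smul continuous_const)
    have h2 : Continuous fun t : ℝ => (NormedSpace.exp (t • Cop m A j)) ((piL m j) x) :=
      ((ContinuousLinearMap.apply ℝ (E m j) ((piL m j) x)).continuous).comp h1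
    exact (continuous_apply _).comp h2
  · -- generator
    intro x
    rw [tendsto_pi_nhds]
    intro j
    have hd : HasDerivAt (fun u : ℝ => NormedSpace.exp (u • Cop m A j))
        (NormedSpace.exp ((0:ℝ) • Cop m A j) * Cop m A j) 0 :=
      hasDerivAt_exp_smul_const (Cop m A j) (0:ℝ)
    rw [zero_smul, NormedSpace.exp_zero, one_mul] at hd
    let L : ((E m j) →L[ℝ] (E m j)) →L[ℝ] ℝ :=
      (ContinuousLinearMap.proj (⟨j, lt_Mf m (le_refl j)⟩ : Fin (Mf m j + 1))).comp
        ((ContinuousLinearMap.apply ℝ (E m j)) (piL m j x))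
    have hd2 : HasDerivAt (fun u : ℝ => L (NormedSpace.exp (u • Cop m A j)))
        (L (Cop m A j)) 0 := L.hasFDerivAt.comp_hasDerivAt 0 hd
    have hL : L (Cop m A j) = A x j := by
      have := keyA hm j 1 x (le_refl j)
      rw [pow_one, pow_one] at this
      exact ((congrArg _ rfl).trans this.symm)
    rw [hasDerivAt_iff_tendsto_slope] at hd2
    have hmono : 𝓝[>] (0:ℝ) ≤ 𝓝[≠] (0:ℝ) :=
      nhdsWithin_mono 0 (fun y hy => ne_of_gt hy)
    have hd3 := hd2.mono_left hmono
    rw [hL] at hd3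
    refine hd3.congr (fun h => ?_)
    have hf0 : L (NormedSpace.exp ((0:ℝ) • Cop m A j)) = x j := by
      rw [zero_smul, NormedSpace.exp_zero]
      rfl
    have hfh : ∀ u : ℝ, L (NormedSpace.exp (u • Cop m A j)) = Texp m A u x j :=
      fun u => rfl
    rw [slope_def_field]
    rw [hfh, hf0]
    simp only [Pi.smul_apply, Pi.sub_apply, smul_eq_mul]
    rw [sub_zero, div_eq_inv_mul]
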